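/- (EGU as Burg) If w(t) > 0 satisfies the Burg mirror flow d/dt(-1/wᵢ) = -η (log wᵢ)/(2wᵢ) · ∂ᵢL(v(t)) with v(t) := (1/4)(log w(t))^{⊙2}, then v(t) satisfies the EGU flow d/dt log vᵢ(t) = -η ∂ᵢ L(v(t)). -/

import Mathlib

/-- EGU as Burg: the Burg mirror flow on `w` with the composite loss
simulates the EGU flow on `v = ¼ (log w)^{⊙2}`. -/
theorem egu_as_burg
    {d : ℕ}
    (gradL : (Fin d → ℝ) → (Fin d → ℝ))  -- the gradient ∇L of the loss
    (η : ℝ) (hη : 0 < η)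
    (w : ℝ → (Fin d → ℝ))
    (hwpos : ∀ t i, 0 < w t i)
    (hlog : ∀ t i, Real.log (w t i) ≠ 0)
    -- Burg mirror flow: d/dt(-1/wᵢ) = -η (log wᵢ)/(2wᵢ) ∂ᵢL(v(t))
    -- with v(t) = ¼ (log w(t))^{⊙2}:
    (hflow : ∀ t i, HasDerivAt (fun s => -(1 / w s i))
        (-η * (Real.log (w t i) / (2 * w t i))
          * gradL (fun j => (1 / 4) * (Real.log (w t j)) ^ 2) i) t) :
    -- v(t) follows the EGU flow d/dt log vᵢ = -η ∂ᵢL(v):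
    ∀ t i, HasDerivAt (fun s => Real.log ((1 / 4) * (Real.log (w s i)) ^ 2))
        (-η * gradL (fun j => (1 / 4) * (Real.log (w t j)) ^ 2) i) t := by
  intro t i
  set g := gradL (fun j => (1 / 4) * (Real.log (w t j)) ^ 2) i with hg
  set c := -η * (Real.log (w t i) / (2 * w t i)) * g with hc
  have hwt : w t i ≠ 0 := (hwpos t i).ne'
  have hf := hflow t i
  -- f s = -(1 / w s i), f t ≠ 0
  have hft : -(1 / w t i) ≠ 0 := by
    simp [hwt]
  -- w s i = -(1 / (-(1 / w s i)))
  have hw : HasDerivAt (fun s => w s i) (c * (w t i) ^ 2) t := by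
    have h1 : HasDerivAt (fun s => -(1 / (-(1 / w s i))))
        (-(-c / (-(1 / w t i)) ^ 2)) t := by
      have := (hf.inv hft).neg
      convert this using 2
      · rfl
      · rfl
      · simp [one_div, hc]
    have heq : (fun s => -(1 / (-(1 / w s i)))) = fun s => w s i := by
      funext s
      have : w s i ≠ 0 := (hwpos s i).ne'
      field_simp
    rw [heq] at h1
    convert h1 using 1
    field_simp
  have hu : HasDerivAt (fun s => Real.log (w s i)) (c * (w t i) ^ 2 / w t i) t :=
    hw.log hwt
  have hu2 : HasDerivAt (fun s => (1 / 4 : ℝ) * (Real.log (w s i)) ^ 2)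
      ((1 / 4 : ℝ) * (2 * Real.log (w t i) * (c * (w t i) ^ 2 / w t i))) t := by
    have := (hu.pow 2).const_mul (1 / 4 : ℝ)
    convert this using 1
    · rfl
    · rfl
    · rfl
    push_cast
    ring
  have hne : (1 / 4 : ℝ) * (Real.log (w t i)) ^ 2 ≠ 0 := by
    have := hlog t i
    positivity
  have h3 := hu2.log hne
  convert h3 using 1
  rw [hc, eq_div_iff hne]
  field_simp
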